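/- For each l₀ > 0 there exist constants c, C > 0, depending only on l₀, such that for all reals x, y, t, h ≥ 0 with y ≥ h ≥ x and y ≥ l₀, setting F(x, y, t, h) := arsinh((cosh x · cosh(y - h) + cosh t · cosh h)/sinh y), one has c · (e^{x - h} + e^{-(y - h - t)_+} + (t + h - y)_+) ≤ F(x, y, t, h) ≤ C · (e^{x - h} + e^{-(y - h - t)_+} + (t + h - y)_+). -/

import Mathlib

/-- For a real number `x`, its positive part `x₊ = max {x, 0}`. -/
noncomputable def ppart (x : ℝ) : ℝ := max x 0

/-- The function `F(x, y, t, h) := arsinh((cosh x · cosh(y - h) + cosh t · cosh h)/sinh y)`. -/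
noncomputable def Ffun (x y t h : ℝ) : ℝ :=
  Real.arsinh ((Real.cosh x * Real.cosh (y - h) + Real.cosh t * Real.cosh h) / Real.sinh y)

lemma aux_arsinh_le_self {u : ℝ} (hu : 0 ≤ u) : Real.arsinh u ≤ u := by
  calc Real.arsinh u ≤ Real.arsinh (Real.sinh u) :=
        Real.arsinh_le_arsinh.mpr (Real.self_le_sinh_iff.mpr hu)
    _ = u := Real.arsinh_sinh u

lemma aux_log_le_arsinh {u : ℝ} (hu : 0 ≤ u) : Real.log (1 + u) ≤ Real.arsinh u := by
  have h1 : (1 : ℝ) ≤ Real.sqrt (1 + u ^ 2) := by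
    nlinarith [Real.sq_sqrt (show (0:ℝ) ≤ 1 + u ^ 2 by positivity),
      Real.sqrt_nonneg (1 + u ^ 2)]
  unfold Real.arsinh
  exact Real.log_le_log (by linarith) (by linarith)

lemma aux_arsinh_le_log {u : ℝ} (hu : 0 ≤ u) : Real.arsinh u ≤ Real.log (1 + 2 * u) := by
  have h1 : Real.sqrt (1 + u ^ 2) ≤ 1 + u := by
    rw [show (1:ℝ) + u = Real.sqrt ((1 + u) ^ 2) from (Real.sqrt_sq (by linarith)).symm]
    exact Real.sqrt_le_sqrt (by nlinarith)
  unfold Real.arsinh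
  have h0 : 0 < u + Real.sqrt (1 + u ^ 2) := by
    have := Real.sqrt_pos.mpr (show (0:ℝ) < 1 + u ^ 2 by positivity)
    linarith
  exact Real.log_le_log h0 (by linarith)

lemma aux_div_le_log {u : ℝ} (hu : 0 ≤ u) : u / (1 + u) ≤ Real.log (1 + u) := by
  have h := Real.one_sub_inv_le_log_of_pos (show (0:ℝ) < 1 + u by linarith)
  have : u / (1 + u) = 1 - (1 + u)⁻¹ := by field_simp; ring
  linarith [this ▸ h, this]

set_option maxHeartbeats 4000000 in
/-- For each `l₀ > 0` there exist constants `c, C > 0`, depending only on `l₀`, such that for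
all reals `x, y, t, h ≥ 0` with `y ≥ h ≥ x` and `y ≥ l₀`,
`c (e^{x-h} + e^{-(y-h-t)₊} + (t+h-y)₊) ≤ F(x,y,t,h) ≤ C (e^{x-h} + e^{-(y-h-t)₊} + (t+h-y)₊)`. -/
theorem stmt10 (l₀ : ℝ) (hl₀ : 0 < l₀) :
    ∃ c C : ℝ, 0 < c ∧ 0 < C ∧
      ∀ x y t h : ℝ, 0 ≤ x → 0 ≤ y → 0 ≤ t → 0 ≤ h → x ≤ h → h ≤ y → l₀ ≤ y →
        c * (Real.exp (x - h) + Real.exp (-(ppart (y - h - t))) + ppart (t + h - y)) ≤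
            Ffun x y t h ∧
          Ffun x y t h ≤
            C * (Real.exp (x - h) + Real.exp (-(ppart (y - h - t))) + ppart (t + h - y)) := by
  set k : ℝ := (1 - Real.exp (-(2 * l₀))) / 2 with hk_def
  have hk_pos : 0 < k := by
    have : Real.exp (-(2 * l₀)) < 1 := Real.exp_lt_one_iff.mpr (by linarith)
    simp only [hk_def]; linarith
  refine ⟨Real.log (3/2) / 4, 1 / k + Real.log (1 + 4 / k) + 1, ?_, ?_, ?_⟩
  · have : (0:ℝ) < Real.log (3/2) := Real.log_pos (by norm_num)
    linarith
  · have h1 : 0 < 1 / k := one_div_pos.mpr hk_pos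
    have h2 : 0 ≤ Real.log (1 + 4 / k) := Real.log_nonneg (by nlinarith [div_pos (show (0:ℝ) < 4 by norm_num) hk_pos])
    linarith
  intro x y t h hx hy ht hh hxh hhy hly
  -- basic positivity facts
  have hey : 0 < Real.exp y := Real.exp_pos y
  have hsy : 0 < Real.sinh y := Real.sinh_pos_iff.mpr (by linarith)
  -- bounds on sinh y
  have hsy_up : Real.sinh y ≤ Real.exp y / 2 := by
    rw [Real.sinh_eq]
    have := Real.exp_pos (-y)
    linarith
  have hsy_lo : k * Real.exp y ≤ Real.sinh y := by
    rw [Real.sinh_eq, hk_def]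
    have h1 : Real.exp (-y) = Real.exp y * Real.exp (-(2 * y)) := by
      rw [← Real.exp_add]; ring_nf
    have h2 : Real.exp (-(2 * y)) ≤ Real.exp (-(2 * l₀)) := Real.exp_le_exp.mpr (by linarith)
    rw [h1]; nlinarith
  -- bounds on cosh
  have cosh_lb : ∀ u : ℝ, Real.exp u / 2 ≤ Real.cosh u := by
    intro u; rw [Real.cosh_eq]; have := (Real.exp_pos (-u)).le; linarith
  have cosh_ub : ∀ u : ℝ, 0 ≤ u → Real.cosh u ≤ Real.exp u := by
    intro u hu; rw [Real.cosh_eq]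
    have : Real.exp (-u) ≤ Real.exp u := Real.exp_le_exp.mpr (by linarith)
    linarith
  set N : ℝ := Real.cosh x * Real.cosh (y - h) + Real.cosh t * Real.cosh h with hN_def
  set b : ℝ := Real.exp (x - h) + Real.exp (t + h - y) with hb_def
  clear_value k
  have hb_pos : 0 < b := by positivity
  have hN_pos : 0 < N := by
    have := Real.cosh_pos (x := x); have := Real.cosh_pos (x := y - h)
    have := Real.cosh_pos (x := t); have := Real.cosh_pos (x := h)
    positivity
  have hN_lo : b * Real.exp y / 4 ≤ N := by
    have h1 := cosh_lb x; have h2 := cosh_lb (y - h); have h3 := cosh_lb t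
    have h4 := cosh_lb h
    have e1 : Real.exp (x - h) * Real.exp y = Real.exp x * Real.exp (y - h) := by
      rw [← Real.exp_add, ← Real.exp_add]; ring_nf
    have e2 : Real.exp (t + h - y) * Real.exp y = Real.exp t * Real.exp h := by
      rw [← Real.exp_add, ← Real.exp_add]; ring_nf
    have := Real.exp_pos x; have := Real.exp_pos (y - h)
    have := Real.exp_pos t; have := Real.exp_pos h
    rw [hN_def, hb_def]
    nlinarith [mul_le_mul h1 h2 (by positivity) (Real.cosh_pos (x := x)).le,
      mul_le_mul h3 h4 (by positivity) (Real.cosh_pos (x := t)).le]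
  have hN_up : N ≤ b * Real.exp y := by
    have h1 := cosh_ub x hx; have h2 := cosh_ub (y - h) (by linarith)
    have h3 := cosh_ub t ht; have h4 := cosh_ub h hh
    have e1 : Real.exp (x - h) * Real.exp y = Real.exp x * Real.exp (y - h) := by
      rw [← Real.exp_add, ← Real.exp_add]; ring_nf
    have e2 : Real.exp (t + h - y) * Real.exp y = Real.exp t * Real.exp h := by
      rw [← Real.exp_add, ← Real.exp_add]; ring_nf
    have := Real.exp_pos x; have := Real.exp_pos (y - h)
    have := Real.exp_pos t; have := Real.exp_pos h
    rw [hN_def, hb_def]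
    nlinarith [mul_le_mul h1 h2 (Real.cosh_pos (x := y - h)).le (Real.exp_pos x).le,
      mul_le_mul h3 h4 (Real.cosh_pos (x := h)).le (Real.exp_pos t).le]
  -- bounds on A := N / sinh y
  have hA_lo : b / 2 ≤ N / Real.sinh y := by
    have : b / 2 = (b * Real.exp y / 4) / (Real.exp y / 2) := by field_simp; ring
    rw [this]
    exact div_le_div₀ hN_pos.le hN_lo hsy (by linarith)
  have hA_up : N / Real.sinh y ≤ b / k := by
    have : b / k = (b * Real.exp y) / (k * Real.exp y) := by
      rw [mul_div_mul_right _ _ (ne_of_gt hey)]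
    rw [this]
    exact div_le_div₀ (by positivity) hN_up (by positivity) hsy_lo
  have hF_lo : Real.arsinh (b / 2) ≤ Ffun x y t h :=
    Real.arsinh_le_arsinh.mpr hA_lo
  have hF_up : Ffun x y t h ≤ Real.arsinh (b / k) :=
    Real.arsinh_le_arsinh.mpr hA_up
  have hlog32 : 0 < Real.log (3/2) := Real.log_pos (by norm_num)
  have hlog32' : Real.log (3/2) ≤ 1 := by
    have := Real.log_le_sub_one_of_pos (show (0:ℝ) < 3/2 by norm_num); linarith
  have hexh : Real.exp (x - h) ≤ 1 := Real.exp_le_one_iff.mpr (by linarith)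
  rcases le_or_gt (t + h - y) 0 with hs | hs
  · -- case t + h ≤ y
    have hp1 : ppart (y - h - t) = y - h - t := max_eq_left (by linarith)
    have hp2 : ppart (t + h - y) = 0 := max_eq_right hs
    have hS : Real.exp (x - h) + Real.exp (-(ppart (y - h - t))) + ppart (t + h - y) = b := by
      rw [hp1, hp2, hb_def]; ring_nf
    rw [hS]
    have hble : b ≤ 2 := by
      have : Real.exp (t + h - y) ≤ 1 := Real.exp_le_one_iff.mpr hs
      rw [hb_def]; linarith
    constructor
    · -- lower bound
      have h1 : b / 2 / (1 + b / 2) ≤ Real.log (1 + b / 2) := aux_div_le_log (by linarith)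
      have h2 : Real.log (1 + b / 2) ≤ Real.arsinh (b / 2) := aux_log_le_arsinh (by linarith)
      have h3 : b / 4 ≤ b / 2 / (1 + b / 2) := by
        rw [div_le_div_iff₀ (by norm_num) (by linarith)]
        nlinarith
      have : Real.log (3/2) / 4 * b ≤ b / 4 := by nlinarith
      linarith
    · -- upper bound
      have h1 : Real.arsinh (b / k) ≤ b / k := aux_arsinh_le_self (div_pos hb_pos hk_pos).le
      have h2 : b / k = 1 / k * b := by ring
      have h3 : 0 ≤ Real.log (1 + 4 / k) := Real.log_nonneg (by nlinarith [div_pos (show (0:ℝ) < 4 by norm_num) hk_pos])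
      nlinarith [hF_up, h1]
  · -- case t + h > y
    set s : ℝ := t + h - y with hs_def
    have hs0 : 0 ≤ s := hs.le
    have hp1 : ppart (y - h - t) = 0 := max_eq_right (by simp only [hs_def] at hs0 ⊢; linarith)
    have hp2 : ppart (t + h - y) = s := max_eq_left hs0
    have hS : Real.exp (x - h) + Real.exp (-(ppart (y - h - t))) + ppart (t + h - y)
        = Real.exp (x - h) + 1 + s := by rw [hp1, hp2]; simp
    rw [hS]
    have hes1 : 1 ≤ Real.exp s := Real.one_le_exp hs0
    have hexpos := Real.exp_pos (x - h)
    have hb_lo : Real.exp s ≤ b := by rw [hb_def]; linarith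
    have hb_up : b ≤ 2 * Real.exp s := by rw [hb_def]; linarith
    constructor
    · -- lower bound
      have h2 : Real.log (1 + b / 2) ≤ Real.arsinh (b / 2) :=
        aux_log_le_arsinh (by positivity)
      have h3 : Real.log (1 + Real.exp s / 2) ≤ Real.log (1 + b / 2) :=
        Real.log_le_log (by positivity) (by linarith)
      rcases le_or_gt s 2 with hs2 | hs2
      · have h4 : Real.log (3 / 2) ≤ Real.log (1 + Real.exp s / 2) :=
          Real.log_le_log (by norm_num) (by linarith)
        nlinarith [hF_lo]
      · have h4 : Real.log (Real.exp s / 2) ≤ Real.log (1 + Real.exp s / 2) :=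
          Real.log_le_log (by positivity) (by linarith)
        have h5 : Real.log (Real.exp s / 2) = s - Real.log 2 := by
          rw [Real.log_div (Real.exp_ne_zero s) (by norm_num), Real.log_exp]
        have hlog2 : Real.log 2 ≤ 1 := by
          have := Real.log_le_sub_one_of_pos (show (0:ℝ) < 2 by norm_num); linarith
        nlinarith [hF_lo]
    · -- upper bound
      have h1 : Real.arsinh (b / k) ≤ Real.log (1 + 2 * (b / k)) :=
        aux_arsinh_le_log (div_pos hb_pos hk_pos).le
      have hbk : 2 * (b / k) ≤ 4 * Real.exp s / k := by
        rw [show 2 * (b / k) = 2 * b / k by ring]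
        exact div_le_div₀ (by positivity) (by linarith) hk_pos le_rfl
      have h2 : Real.log (1 + 2 * (b / k)) ≤ Real.log ((1 + 4 / k) * Real.exp s) := by
        apply Real.log_le_log (by nlinarith [div_pos hb_pos hk_pos])
        have e1 : (1 + 4 / k) * Real.exp s = Real.exp s + 4 * Real.exp s / k := by ring
        rw [e1]; linarith
      have hk4 : (0:ℝ) < 1 + 4 / k := by
        nlinarith [div_pos (show (0:ℝ) < 4 by norm_num) hk_pos]
      have h3 : Real.log ((1 + 4 / k) * Real.exp s) = Real.log (1 + 4 / k) + s := by
        have e1 := Real.log_mul hk4.ne' (Real.exp_ne_zero s)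
        have e2 := Real.log_exp s
        linarith
      have hL : 0 ≤ Real.log (1 + 4 / k) := Real.log_nonneg (by nlinarith [div_pos (show (0:ℝ) < 4 by norm_num) hk_pos])
      have hCk : 0 ≤ 1 / k := (one_div_pos.mpr hk_pos).le
      nlinarith [hF_up, mul_nonneg hL hs0, mul_nonneg hCk hs0,
        mul_nonneg (add_nonneg (add_nonneg hCk hL) zero_le_one) hexpos.le]
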